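/- Let R = ℂ[A_{jk}, B_{jk} : 1 ≤ j,k ≤ 3] be the polynomial ring in the entries of two 3×3 matrices of indeterminates A and B (j is the row index, k the column index). Define the derivations E_{i,j} := ∑_{k=1}^{3} (A_{k i}·∂/∂A_{k j} + B_{k i}·∂/∂B_{k j}) on R, the operator ∇̃ := (E_{1,1} − E_{2,2} + 1)∘E_{3,1} + E_{3,2}∘E_{2,1} (where 1 is the identity operator), and the elements a₁ := A_{11}, a₃ := A_{13}, b₁ := B_{11}, b₃ := B_{13}, a₁₂ := A_{11}A_{22} − A_{12}A_{21}, b₁₂ := B_{11}B_{22} − B_{12}B_{21}, (ab)₁₂ := A_{11}B_{12} − A_{12}B_{11}, (aab) := det of the 3×3 matrix with rows (A_{11},A_{12},A_{13}), (A_{21},A_{22},A_{23}), (B_{11},B_{12},B_{13}), and (abb) := det of the 3×3 matrix with rows (A_{11},A_{12},A_{13}), (B_{11},B_{12},B_{13}), (B_{21},B_{22},B_{23}). Then for all nonnegative integers α, β, γ, δ, ω, setting g := a₁^α·b₁^β·a₁₂^γ·b₁₂^δ·(ab)₁₂^ω, one has ∇̃(g) = (α+β+γ+δ+ω+1)·(α·a₃·a₁^{α−1}·b₁^β·a₁₂^γ·b₁₂^δ·(ab)₁₂^ω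 + β·b₃·a₁^α·b₁^{β−1}·a₁₂^γ·b₁₂^δ·(ab)₁₂^ω) − β·γ·(aab)·a₁^α·b₁^{β−1}·a₁₂^{γ−1}·b₁₂^δ·(ab)₁₂^ω − α·δ·(abb)·a₁^{α−1}·b₁^β·a₁₂^γ·b₁₂^{δ−1}·(ab)₁₂^ω, where any term whose integer coefficient (α, β, β·γ, or α·δ) vanishes is understood to be zero (so negative exponents never occur in nonzero terms). -/

import Mathlib

open MvPolynomial Finset

/-- Entry `A_{jk}` (row `j`, column `k`) of the first matrix of indeterminates. -/
noncomputable abbrev A (j k : Fin 3) : MvPolynomial (Fin 2 × Fin 3 × Fin 3) ℂ :=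
  X ((0 : Fin 2), j, k)

/-- Entry `B_{jk}` (row `j`, column `k`) of the second matrix of indeterminates. -/
noncomputable abbrev B (j k : Fin 3) : MvPolynomial (Fin 2 × Fin 3 × Fin 3) ℂ :=
  X ((1 : Fin 2), j, k)

/-- The derivation `E_{i,j} = ∑ₖ (A_{ki} ∂/∂A_{kj} + B_{ki} ∂/∂B_{kj})`
(indices `i j : Fin 3` are `0`-based). -/
noncomputable def E (i j : Fin 3) (p : MvPolynomial (Fin 2 × Fin 3 × Fin 3) ℂ) :
    MvPolynomial (Fin 2 × Fin 3 × Fin 3) ℂ :=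
  ∑ k : Fin 3,
    (A k i * pderiv ((0 : Fin 2), k, j) p + B k i * pderiv ((1 : Fin 2), k, j) p)

/-- The operator `∇̃ = (E₁₁ − E₂₂ + 1)E₃₁ + E₃₂E₂₁` (1-based indices). -/
noncomputable def nablaT (p : MvPolynomial (Fin 2 × Fin 3 × Fin 3) ℂ) :
    MvPolynomial (Fin 2 × Fin 3 × Fin 3) ℂ :=
  E 0 0 (E 2 0 p) - E 1 1 (E 2 0 p) + E 2 0 p + E 2 1 (E 1 0 p)

noncomputable abbrev a₁ := A 0 0
noncomputable abbrev a₃ := A 0 2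
noncomputable abbrev b₁ := B 0 0
noncomputable abbrev b₃ := B 0 2
noncomputable abbrev a₁₂ := A 0 0 * A 1 1 - A 0 1 * A 1 0
noncomputable abbrev b₁₂ := B 0 0 * B 1 1 - B 0 1 * B 1 0
noncomputable abbrev ab₁₂ := A 0 0 * B 0 1 - A 0 1 * B 0 0
noncomputable abbrev aab : MvPolynomial (Fin 2 × Fin 3 × Fin 3) ℂ :=
  Matrix.det !![A 0 0, A 0 1, A 0 2; A 1 0, A 1 1, A 1 2; B 0 0, B 0 1, B 0 2]
noncomputable abbrev abb : MvPolynomial (Fin 2 × Fin 3 × Fin 3) ℂ :=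
  Matrix.det !![A 0 0, A 0 1, A 0 2; B 0 0, B 0 1, B 0 2; B 1 0, B 1 1, B 1 2]

local notation "P" => MvPolynomial (Fin 2 × Fin 3 × Fin 3) ℂ

lemma E_add (i j : Fin 3) (p q : P) : E i j (p + q) = E i j p + E i j q := by
  simp [E, Fin.sum_univ_three, map_add]; ring
lemma E_sub (i j : Fin 3) (p q : P) : E i j (p - q) = E i j p - E i j q := by
  simp [E, Fin.sum_univ_three, map_sub]; ring
lemma E_mul (i j : Fin 3) (p q : P) : E i j (p * q) = E i j p * q + p * E i j q := by
  simp [E, Fin.sum_univ_three, pderiv_mul]; ring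
lemma E_C (i j : Fin 3) (a : ℂ) : E i j (C a : P) = 0 := by
  simp [E, pderiv_C]
lemma E_one (i j : Fin 3) : E i j (1 : P) = 0 := by
  simpa using E_C i j 1
lemma E_natCast (i j : Fin 3) (n : ℕ) : E i j ((n : ℕ) : P) = 0 := by
  rw [← map_natCast (C : ℂ →+* P)]; exact E_C i j _
lemma E_A (i j : Fin 3) (r s : Fin 3) : E i j (A r s) = if s = j then A r i else 0 := by
  simp only [E, Fin.sum_univ_three, A, B, pderiv_X, Pi.single_apply, Prod.mk.injEq]
  rcases eq_or_ne s j with rfl | h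
  · fin_cases r <;> simp
  · fin_cases r <;> simp [h, Ne.symm h]
lemma E_B (i j : Fin 3) (r s : Fin 3) : E i j (B r s) = if s = j then B r i else 0 := by
  simp only [E, Fin.sum_univ_three, A, B, pderiv_X, Pi.single_apply, Prod.mk.injEq]
  rcases eq_or_ne s j with rfl | h
  · fin_cases r <;> simp
  · fin_cases r <;> simp [h, Ne.symm h]
lemma E_pow_succ (i j : Fin 3) (p : P) (n : ℕ) :
    E i j (p ^ (n + 1)) = ((n + 1 : ℕ) : P) * p ^ n * E i j p := by
  induction n with
  | zero => simp [E_mul, E_one]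
  | succ n ih => rw [pow_succ, E_mul, ih, pow_succ]; push_cast; ring
lemma E_pow_of_euler {i j : Fin 3} {p : P} (h : E i j p = p) (n : ℕ) :
    E i j (p ^ n) = (n : P) * p ^ n := by
  induction n with
  | zero => simp [E_one]
  | succ n ih => rw [pow_succ, E_mul, ih, h]; push_cast; ring
lemma E_pow_of_zero {i j : Fin 3} {p : P} (h : E i j p = 0) (n : ℕ) :
    E i j (p ^ n) = 0 := by
  induction n with
  | zero => simp [E_one]
  | succ n ih => rw [pow_succ, E_mul, ih, h]; ring

-- values on generators
lemma E00_a1 : E 0 0 a₁ = a₁ := by simp [E_A]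
lemma E00_b1 : E 0 0 b₁ = b₁ := by simp [E_B]
lemma E00_a12 : E 0 0 a₁₂ = a₁₂ := by simp [E_sub, E_mul, E_A]
lemma E00_b12 : E 0 0 b₁₂ = b₁₂ := by simp [E_sub, E_mul, E_B]
lemma E00_ab12 : E 0 0 ab₁₂ = ab₁₂ := by simp [E_sub, E_mul, E_A, E_B]
lemma E11_a1 : E 1 1 a₁ = 0 := by simp [E_A]
lemma E11_b1 : E 1 1 b₁ = 0 := by simp [E_B]
lemma E11_a12 : E 1 1 a₁₂ = a₁₂ := by simp [E_sub, E_mul, E_A]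
lemma E11_b12 : E 1 1 b₁₂ = b₁₂ := by simp [E_sub, E_mul, E_B]
lemma E11_ab12 : E 1 1 ab₁₂ = ab₁₂ := by simp [E_sub, E_mul, E_A, E_B]
lemma E21_a1 : E 2 1 a₁ = 0 := by simp [E_A]
lemma E21_b1 : E 2 1 b₁ = 0 := by simp [E_B]

-- pow instances
lemma E00_a1_pow (n : ℕ) : E 0 0 (a₁ ^ n) = (n : P) * a₁ ^ n := E_pow_of_euler E00_a1 n
lemma E00_b1_pow (n : ℕ) : E 0 0 (b₁ ^ n) = (n : P) * b₁ ^ n := E_pow_of_euler E00_b1 n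
lemma E00_a12_pow (n : ℕ) : E 0 0 (a₁₂ ^ n) = (n : P) * a₁₂ ^ n := E_pow_of_euler E00_a12 n
lemma E00_b12_pow (n : ℕ) : E 0 0 (b₁₂ ^ n) = (n : P) * b₁₂ ^ n := E_pow_of_euler E00_b12 n
lemma E00_ab12_pow (n : ℕ) : E 0 0 (ab₁₂ ^ n) = (n : P) * ab₁₂ ^ n := E_pow_of_euler E00_ab12 n
lemma E11_a1_pow (n : ℕ) : E 1 1 (a₁ ^ n) = 0 := E_pow_of_zero E11_a1 n
lemma E11_b1_pow (n : ℕ) : E 1 1 (b₁ ^ n) = 0 := E_pow_of_zero E11_b1 n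
lemma E11_a12_pow (n : ℕ) : E 1 1 (a₁₂ ^ n) = (n : P) * a₁₂ ^ n := E_pow_of_euler E11_a12 n
lemma E11_b12_pow (n : ℕ) : E 1 1 (b₁₂ ^ n) = (n : P) * b₁₂ ^ n := E_pow_of_euler E11_b12 n
lemma E11_ab12_pow (n : ℕ) : E 1 1 (ab₁₂ ^ n) = (n : P) * ab₁₂ ^ n := E_pow_of_euler E11_ab12 n
lemma E21_a1_pow (n : ℕ) : E 2 1 (a₁ ^ n) = 0 := E_pow_of_zero E21_a1 n
lemma E21_b1_pow (n : ℕ) : E 2 1 (b₁ ^ n) = 0 := E_pow_of_zero E21_b1 n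


noncomputable abbrev ma : P := A 0 2 * A 1 1 - A 0 1 * A 1 2
noncomputable abbrev mb : P := B 0 2 * B 1 1 - B 0 1 * B 1 2
noncomputable abbrev mab : P := A 0 2 * B 0 1 - A 0 1 * B 0 2

lemma E20_a1 : E 2 0 a₁ = a₃ := by simp [E_A]
lemma E20_b1 : E 2 0 b₁ = b₃ := by simp [E_B]
lemma E20_a12 : E 2 0 a₁₂ = ma := by simp [E_sub, E_mul, E_A]
lemma E20_b12 : E 2 0 b₁₂ = mb := by simp [E_sub, E_mul, E_B]
lemma E20_ab12 : E 2 0 ab₁₂ = mab := by simp [E_sub, E_mul, E_A, E_B]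

noncomputable abbrev na : P := A 0 0 * A 1 2 - A 0 2 * A 1 0
noncomputable abbrev nb : P := B 0 0 * B 1 2 - B 0 2 * B 1 0
noncomputable abbrev nab : P := A 0 0 * B 0 2 - A 0 2 * B 0 0

lemma E10_a1 : E 1 0 a₁ = A 0 1 := by simp [E_A]
lemma E10_b1 : E 1 0 b₁ = B 0 1 := by simp [E_B]
lemma E10_a12 : E 1 0 a₁₂ = 0 := by simp [E_sub, E_mul, E_A]
lemma E10_b12 : E 1 0 b₁₂ = 0 := by simp [E_sub, E_mul, E_B]
lemma E10_ab12 : E 1 0 ab₁₂ = 0 := by simp [E_sub, E_mul, E_A, E_B]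
lemma E21_a12 : E 2 1 a₁₂ = na := by simp [E_sub, E_mul, E_A]
lemma E21_b12 : E 2 1 b₁₂ = nb := by simp [E_sub, E_mul, E_B]
lemma E21_ab12 : E 2 1 ab₁₂ = nab := by simp [E_sub, E_mul, E_A, E_B]
lemma E00_a3 : E 0 0 a₃ = 0 := by simp [E_A]
lemma E00_b3 : E 0 0 b₃ = 0 := by simp [E_B]
lemma E00_ma : E 0 0 ma = 0 := by simp [E_sub, E_mul, E_A]
lemma E00_mb : E 0 0 mb = 0 := by simp [E_sub, E_mul, E_B]
lemma E00_mab : E 0 0 mab = 0 := by simp [E_sub, E_mul, E_A, E_B]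
lemma E11_a3 : E 1 1 a₃ = 0 := by simp [E_A]
lemma E11_b3 : E 1 1 b₃ = 0 := by simp [E_B]
lemma E11_ma : E 1 1 ma = ma := by simp [E_sub, E_mul, E_A]
lemma E11_mb : E 1 1 mb = mb := by simp [E_sub, E_mul, E_B]
lemma E11_mab : E 1 1 mab = mab := by simp [E_sub, E_mul, E_A, E_B]
lemma E21_A01 : E 2 1 (A 0 1) = A 0 2 := by simp [E_A]
lemma E21_B01 : E 2 1 (B 0 1) = B 0 2 := by simp [E_B]

lemma E_pow (i j : Fin 3) (p : P) (n : ℕ) :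
    E i j (p ^ n) = (n : P) * p ^ (n - 1) * E i j p := by
  cases n with
  | zero => simp [E_one]
  | succ n => rw [E_pow_succ]; simp

lemma E_term (i j : Fin 3) (n : ℕ) (v q : P) :
    E i j ((n : P) * v * q) = (n : P) * (E i j v * q + v * E i j q) := by
  rw [E_mul, E_mul, E_natCast]; ring

-- first-order actions on the monomial M
lemma L20 (α β γ δ ω : ℕ) :
    E 2 0 (a₁^α * b₁^β * a₁₂^γ * b₁₂^δ * ab₁₂^ω) =
      (α : P) * a₃ * (a₁^(α-1) * b₁^β * a₁₂^γ * b₁₂^δ * ab₁₂^ω)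
    + (β : P) * b₃ * (a₁^α * b₁^(β-1) * a₁₂^γ * b₁₂^δ * ab₁₂^ω)
    + (γ : P) * ma * (a₁^α * b₁^β * a₁₂^(γ-1) * b₁₂^δ * ab₁₂^ω)
    + (δ : P) * mb * (a₁^α * b₁^β * a₁₂^γ * b₁₂^(δ-1) * ab₁₂^ω)
    + (ω : P) * mab * (a₁^α * b₁^β * a₁₂^γ * b₁₂^δ * ab₁₂^(ω-1)) := by
  simp only [E_mul, E_pow, E20_a1, E20_b1, E20_a12, E20_b12, E20_ab12]; ring

lemma L10 (α β γ δ ω : ℕ) :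
    E 1 0 (a₁^α * b₁^β * a₁₂^γ * b₁₂^δ * ab₁₂^ω) =
      (α : P) * A 0 1 * (a₁^(α-1) * b₁^β * a₁₂^γ * b₁₂^δ * ab₁₂^ω)
    + (β : P) * B 0 1 * (a₁^α * b₁^(β-1) * a₁₂^γ * b₁₂^δ * ab₁₂^ω) := by
  simp only [E_mul, E_pow, E10_a1, E10_b1, E10_a12, E10_b12, E10_ab12]; ring

lemma L00 (α β γ δ ω : ℕ) :
    E 0 0 (a₁^α * b₁^β * a₁₂^γ * b₁₂^δ * ab₁₂^ω) =
      ((α+β+γ+δ+ω : ℕ) : P) * (a₁^α * b₁^β * a₁₂^γ * b₁₂^δ * ab₁₂^ω) := by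
  simp only [E_mul, E00_a1_pow, E00_b1_pow, E00_a12_pow, E00_b12_pow, E00_ab12_pow]
  push_cast; ring

lemma L11 (α β γ δ ω : ℕ) :
    E 1 1 (a₁^α * b₁^β * a₁₂^γ * b₁₂^δ * ab₁₂^ω) =
      ((γ+δ+ω : ℕ) : P) * (a₁^α * b₁^β * a₁₂^γ * b₁₂^δ * ab₁₂^ω) := by
  simp only [E_mul, E11_a1_pow, E11_b1_pow, E11_a12_pow, E11_b12_pow, E11_ab12_pow]
  push_cast; ring

lemma L21 (α β γ δ ω : ℕ) :
    E 2 1 (a₁^α * b₁^β * a₁₂^γ * b₁₂^δ * ab₁₂^ω) =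
      (γ : P) * na * (a₁^α * b₁^β * a₁₂^(γ-1) * b₁₂^δ * ab₁₂^ω)
    + (δ : P) * nb * (a₁^α * b₁^β * a₁₂^γ * b₁₂^(δ-1) * ab₁₂^ω)
    + (ω : P) * nab * (a₁^α * b₁^β * a₁₂^γ * b₁₂^δ * ab₁₂^(ω-1)) := by
  simp only [E_mul, E_pow, E21_a1_pow, E21_b1_pow, E21_a1, E21_b1, E21_a12, E21_b12, E21_ab12]; ring

lemma aab_eq : aab = A 0 0 * (A 1 1 * B 0 2) - A 0 0 * (A 1 2 * B 0 1)
    - A 0 1 * (A 1 0 * B 0 2) + A 0 1 * (A 1 2 * B 0 0)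
    + A 0 2 * (A 1 0 * B 0 1) - A 0 2 * (A 1 1 * B 0 0) := by
  rw [show aab = Matrix.det !![A 0 0, A 0 1, A 0 2; A 1 0, A 1 1, A 1 2; B 0 0, B 0 1, B 0 2]
    from rfl, Matrix.det_fin_three]
  norm_num [Matrix.cons_val_zero, Matrix.cons_val_one, Matrix.cons_val_two, Matrix.tail_cons, Matrix.head_cons]
  ring

lemma abb_eq : abb = A 0 0 * (B 0 1 * B 1 2) - A 0 0 * (B 0 2 * B 1 1)
    - A 0 1 * (B 0 0 * B 1 2) + A 0 1 * (B 0 2 * B 1 0)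
    + A 0 2 * (B 0 0 * B 1 1) - A 0 2 * (B 0 1 * B 1 0) := by
  rw [show abb = Matrix.det !![A 0 0, A 0 1, A 0 2; B 0 0, B 0 1, B 0 2; B 1 0, B 1 1, B 1 2]
    from rfl, Matrix.det_fin_three]
  norm_num [Matrix.cons_val_zero, Matrix.cons_val_one, Matrix.cons_val_two, Matrix.tail_cons, Matrix.head_cons]
  ring


set_option maxHeartbeats 4000000 in
/-- The action of `∇̃₃,₁` on `g = a₁^α b₁^β a₁₂^γ b₁₂^δ (ab)₁₂^ω`. -/
theorem nablaT_apply (α β γ δ ω : ℕ) :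
    nablaT (a₁ ^ α * b₁ ^ β * a₁₂ ^ γ * b₁₂ ^ δ * ab₁₂ ^ ω) =
      C ((α + β + γ + δ + ω + 1 : ℕ) : ℂ) *
          (C ((α : ℕ) : ℂ) * a₃ * (a₁ ^ (α - 1) * b₁ ^ β * a₁₂ ^ γ * b₁₂ ^ δ * ab₁₂ ^ ω) +
           C ((β : ℕ) : ℂ) * b₃ * (a₁ ^ α * b₁ ^ (β - 1) * a₁₂ ^ γ * b₁₂ ^ δ * ab₁₂ ^ ω)) -
        C ((β * γ : ℕ) : ℂ) * aab *
          (a₁ ^ α * b₁ ^ (β - 1) * a₁₂ ^ (γ - 1) * b₁₂ ^ δ * ab₁₂ ^ ω) -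
        C ((α * δ : ℕ) : ℂ) * abb *
          (a₁ ^ (α - 1) * b₁ ^ β * a₁₂ ^ γ * b₁₂ ^ (δ - 1) * ab₁₂ ^ ω) := by
  rw [aab_eq, abb_eq]
  simp only [nablaT, L20, L10]
  simp only [E_add, E_term, E00_a3, E00_b3, E00_ma, E00_mb, E00_mab,
    E11_a3, E11_b3, E11_ma, E11_mb, E11_mab, E21_A01, E21_B01, L00, L11, L21]
  simp only [map_natCast]
  rcases α with _|α <;> rcases β with _|β <;> rcases γ with _|γ <;>
    rcases δ with _|δ <;> rcases ω with _|ω <;>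
  · simp only [Nat.succ_sub_one, Nat.zero_sub, pow_zero, Nat.cast_zero]
    push_cast
    ring
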